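/- arXiv:2407.04702 — 2 statements merged into one kernel-verified Lean document; each statement's English description precedes it below -/
import Mathlib

section
/- Let 0 ≤ a < b < c < d < 2π be four angles and let A, B, C, D be the corresponding points (cos·, sin·) on the unit circle. Then for every α > 0, 1/|AC|^α + 1/|BD|^α < 1/|AD|^α + 1/|BC|^α, where |XY| denotes Euclidean distance. -/
open Real

/-- Euclidean distance between the points at angles `s` and `t` on the unit circle. -/
noncomputable def circleDist (s t : ℝ) : ℝ :=
  Real.sqrt ((Real.cos s - Real.cos t) ^ 2 + (Real.sin s - Real.sin t) ^ 2)

/-- Auxiliary: the potential as a function of the central-angle `x`. -/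
noncomputable def ptPF (α x : ℝ) : ℝ := (2 * Real.sin (x / 2)) ^ (-α)

lemma ptCircleDist_eq (s t : ℝ) (hst : s ≤ t) (h2 : t - s ≤ 2 * π) :
    circleDist s t = 2 * Real.sin ((t - s) / 2) := by
  have hsin : 0 ≤ Real.sin ((t - s) / 2) :=
    Real.sin_nonneg_of_nonneg_of_le_pi (by linarith) (by linarith [Real.pi_pos])
  have key : (Real.cos s - Real.cos t) ^ 2 + (Real.sin s - Real.sin t) ^ 2
      = (2 * Real.sin ((t - s) / 2)) ^ 2 := by
    have h1 := Real.cos_sub t s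
    have h2' := Real.cos_two_mul' ((t - s) / 2)
    have hh : (2 : ℝ) * ((t - s) / 2) = t - s := by ring
    rw [hh] at h2'
    have h3 := Real.sin_sq_add_cos_sq ((t - s) / 2)
    have h4 := Real.sin_sq_add_cos_sq s
    have h5 := Real.sin_sq_add_cos_sq t
    nlinarith [h1, h2', h3, h4, h5]
  rw [circleDist, key, Real.sqrt_sq (by positivity)]

lemma ptHanti (β x y : ℝ) (hβ : 0 < β) (hx : 0 < x) (hxy : x < y) (hy : y < π) :
    Real.cos y * Real.sin x ^ β < Real.cos x * Real.sin y ^ β := by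
  have hsx : 0 < Real.sin x := Real.sin_pos_of_pos_of_lt_pi hx (hxy.trans hy)
  have hsy : 0 < Real.sin y := Real.sin_pos_of_pos_of_lt_pi (hx.trans hxy) hy
  have hcc : Real.cos y < Real.cos x :=
    Real.cos_lt_cos_of_nonneg_of_le_pi hx.le hy.le hxy
  rcases le_or_gt (Real.cos x) 0 with hcx | hcx
  · -- both angles in [π/2, π): sin is decreasing there
    have hxge : π / 2 ≤ x := by
      by_contra h
      push_neg at h
      exact absurd (Real.cos_pos_of_mem_Ioo ⟨by linarith [Real.pi_pos], h⟩) (not_lt.2 hcx)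
    have hsyx : Real.sin y ≤ Real.sin x := by
      rw [← Real.sin_pi_sub y, ← Real.sin_pi_sub x]
      have h1 : π - y < π - x := by linarith
      have h2 : π - x ≤ π / 2 := by linarith
      exact (Real.strictMonoOn_sin ⟨by linarith, by linarith⟩ ⟨by linarith, h2⟩ h1).le
    have hpow : Real.sin y ^ β ≤ Real.sin x ^ β :=
      Real.rpow_le_rpow hsy.le hsyx hβ.le
    calc Real.cos y * Real.sin x ^ β < Real.cos x * Real.sin x ^ β := by
          exact mul_lt_mul_of_pos_right hcc (Real.rpow_pos_of_pos hsx β)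
      _ ≤ Real.cos x * Real.sin y ^ β := by
          exact mul_le_mul_of_nonpos_left hpow hcx
  · rcases le_or_gt (Real.cos y) 0 with hcy | hcy
    · have : Real.cos y * Real.sin x ^ β ≤ 0 :=
        mul_nonpos_of_nonpos_of_nonneg hcy (Real.rpow_pos_of_pos hsx β).le
      have hpos : 0 < Real.cos x * Real.sin y ^ β :=
        mul_pos hcx (Real.rpow_pos_of_pos hsy β)
      linarith
    · -- both in (0, π/2): sin increasing
      have hylt : y < π / 2 := by
        by_contra h
        push_neg at h
        have := Real.cos_nonpos_of_pi_div_two_le_of_le h (by linarith [Real.pi_pos])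
        linarith
      have hsxy : Real.sin x < Real.sin y :=
        Real.strictMonoOn_sin ⟨by linarith, by linarith⟩ ⟨by linarith, hylt.le⟩ hxy
      have hpow : Real.sin x ^ β < Real.sin y ^ β :=
        Real.rpow_lt_rpow hsx.le hsxy hβ
      calc Real.cos y * Real.sin x ^ β < Real.cos x * Real.sin x ^ β :=
            mul_lt_mul_of_pos_right hcc (Real.rpow_pos_of_pos hsx β)
        _ < Real.cos x * Real.sin y ^ β := mul_lt_mul_of_pos_left hpow hcx

lemma ptPF_hasDeriv (α x : ℝ) (hx : 0 < x) (h2 : x < 2 * π) :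
    HasDerivAt (ptPF α)
      (Real.cos (x / 2) * (-α) * (2 * Real.sin (x / 2)) ^ (-α - 1)) x := by
  have hsin : 0 < Real.sin (x / 2) :=
    Real.sin_pos_of_pos_of_lt_pi (by linarith) (by linarith)
  have hg : HasDerivAt (fun y : ℝ => 2 * Real.sin (y / 2)) (Real.cos (x / 2)) x := by
    have h1 : HasDerivAt (fun y : ℝ => y / 2) (1 / 2) x := (hasDerivAt_id x).div_const 2
    have h2 := h1.sin
    have h3 := h2.const_mul (2 : ℝ)
    exact h3.congr_deriv (by ring)
  have h := hg.rpow_const (p := -α) (Or.inl (by positivity))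
  have : HasDerivAt (fun y : ℝ => (2 * Real.sin (y / 2)) ^ (-α))
      (Real.cos (x / 2) * (-α) * (2 * Real.sin (x / 2)) ^ (-α - 1)) x := h
  exact this

lemma ptKey (α p q u v : ℝ) (hα : 0 < α) (hp : 0 < p) (hq : q < 2 * π)
    (hpu : p < u) (huq : u < q) (hpv : p < v) (hvq : v < q) (hsum : u + v = p + q) :
    ptPF α u + ptPF α v < ptPF α p + ptPF α q := by
  have hpq : p < q := hpu.trans huq
  set m : ℝ := (p + q) / 2 with hm
  set t : ℝ := (q - p) / 2 with ht
  have htpos : 0 < t := by simp [ht]; linarith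
  set G : ℝ → ℝ := fun s => ptPF α (m - s) + ptPF α (m + s) with hG
  have hderiv : ∀ s ∈ Set.Icc (0 : ℝ) t,
      HasDerivAt G
        (α * (Real.cos ((m - s) / 2) * (2 * Real.sin ((m - s) / 2)) ^ (-α - 1)
          - Real.cos ((m + s) / 2) * (2 * Real.sin ((m + s) / 2)) ^ (-α - 1))) s := by
    intro s hs
    obtain ⟨hs0, hst⟩ := hs
    have h1 : 0 < m - s := by simp only [hm]; linarith [hst, ht ▸ hst]
    have h1' : m - s < 2 * π := by
      have : m < 2 * π := by simp only [hm]; linarith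
      linarith
    have h2 : 0 < m + s := by
      have : 0 < m := by simp only [hm]; linarith
      linarith
    have h2' : m + s < 2 * π := by
      have : m + s ≤ q := by simp only [hm, ht] at hst ⊢; linarith
      linarith
    have hd1 := (ptPF_hasDeriv α (m - s) h1 h1').comp s ((hasDerivAt_id s).const_sub m)
    have hd2 := (ptPF_hasDeriv α (m + s) h2 h2').comp s ((hasDerivAt_id s).const_add m)
    have hsum' := hd1.add hd2
    exact hsum'.congr_deriv (by ring)
  have hmono : StrictMonoOn G (Set.Icc 0 t) := by
    apply strictMonoOn_of_deriv_pos (convex_Icc 0 t)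
    · exact fun s hs => ((hderiv s hs).continuousAt).continuousWithinAt
    · intro s hs
      rw [interior_Icc] at hs
      obtain ⟨hs0, hst⟩ := hs
      rw [(hderiv s ⟨hs0.le, hst.le⟩).deriv]
      have hx1 : 0 < (m - s) / 2 := by
        have : p ≤ m - s := by simp only [hm, ht] at hst ⊢; linarith
        linarith
      have hx12 : (m - s) / 2 < (m + s) / 2 := by linarith
      have hx2 : (m + s) / 2 < π := by
        have : m + s < q := by simp only [hm, ht] at hst ⊢; linarith
        linarith
      have key := ptHanti (α + 1) ((m - s) / 2) ((m + s) / 2) (by linarith) hx1 hx12 hx2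
      have hs1 : 0 < Real.sin ((m - s) / 2) :=
        Real.sin_pos_of_pos_of_lt_pi hx1 (hx12.trans hx2)
      have hs2 : 0 < Real.sin ((m + s) / 2) :=
        Real.sin_pos_of_pos_of_lt_pi (hx1.trans hx12) hx2
      have hr1 : (2 * Real.sin ((m - s) / 2)) ^ (-α - 1)
          = ((2 * Real.sin ((m - s) / 2)) ^ (α + 1))⁻¹ := by
        rw [show -α - 1 = -(α + 1) by ring, Real.rpow_neg (by positivity)]
      have hr2 : (2 * Real.sin ((m + s) / 2)) ^ (-α - 1)
          = ((2 * Real.sin ((m + s) / 2)) ^ (α + 1))⁻¹ := by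
        rw [show -α - 1 = -(α + 1) by ring, Real.rpow_neg (by positivity)]
      have hp1 : 0 < (2 * Real.sin ((m - s) / 2)) ^ (α + 1) :=
        Real.rpow_pos_of_pos (by positivity) _
      have hp2 : 0 < (2 * Real.sin ((m + s) / 2)) ^ (α + 1) :=
        Real.rpow_pos_of_pos (by positivity) _
      have hmain : Real.cos ((m + s) / 2) * (2 * Real.sin ((m + s) / 2)) ^ (-α - 1)
          < Real.cos ((m - s) / 2) * (2 * Real.sin ((m - s) / 2)) ^ (-α - 1) := by
        rw [hr1, hr2, ← div_eq_mul_inv, ← div_eq_mul_inv, div_lt_div_iff₀ hp2 hp1]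
        have e1 : (2 * Real.sin ((m - s) / 2)) ^ (α + 1)
            = 2 ^ (α + 1) * Real.sin ((m - s) / 2) ^ (α + 1) :=
          Real.mul_rpow (by norm_num) hs1.le
        have e2 : (2 * Real.sin ((m + s) / 2)) ^ (α + 1)
            = 2 ^ (α + 1) * Real.sin ((m + s) / 2) ^ (α + 1) :=
          Real.mul_rpow (by norm_num) hs2.le
        rw [e1, e2]
        have h2p : (0:ℝ) < 2 ^ (α + 1) := Real.rpow_pos_of_pos two_pos _
        nlinarith [mul_lt_mul_of_pos_left key h2p]
      exact mul_pos hα (sub_pos.2 hmain)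
  set s₀ : ℝ := |v - u| / 2 with hs₀
  have hs₀0 : 0 ≤ s₀ := by positivity
  have habs : |v - u| < q - p := by
    rw [abs_lt]; constructor <;> linarith
  have hs₀t : s₀ < t := by rw [hs₀, ht]; linarith
  have hlt := hmono ⟨hs₀0, hs₀t.le⟩ ⟨htpos.le, le_refl t⟩ hs₀t
  have hGt : G t = ptPF α p + ptPF α q := by
    have h1 : m - t = p := by rw [hm, ht]; ring
    have h2 : m + t = q := by rw [hm, ht]; ring
    simp only [hG, h1, h2]
  have hGs : G s₀ = ptPF α u + ptPF α v := by
    rcases le_total u v with h | h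
    · have h1 : m - s₀ = u := by
        rw [hm, hs₀, abs_of_nonneg (by linarith)]; linarith
      have h2 : m + s₀ = v := by
        rw [hm, hs₀, abs_of_nonneg (by linarith)]; linarith
      simp only [hG, h1, h2]
    · have h1 : m - s₀ = v := by
        rw [hm, hs₀, abs_of_nonpos (by linarith)]; linarith
      have h2 : m + s₀ = u := by
        rw [hm, hs₀, abs_of_nonpos (by linarith)]; linarith
      simp only [hG, h1, h2, add_comm]
  rw [hGs, hGt] at hlt
  exact hlt

theorem ptolemy_type_points (a b c d α : ℝ) (ha : 0 ≤ a) (hab : a < b) (hbc : b < c)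
    (hcd : c < d) (hd : d < 2 * Real.pi) (hα : 0 < α) :
    1 / circleDist a c ^ α + 1 / circleDist b d ^ α <
      1 / circleDist a d ^ α + 1 / circleDist b c ^ α := by
  have hpi := Real.pi_pos
  have conv : ∀ s t : ℝ, s ≤ t → t - s ≤ 2 * π →
      1 / circleDist s t ^ α = ptPF α (t - s) := by
    intro s t hst h2
    have hsin : 0 ≤ Real.sin ((t - s) / 2) :=
      Real.sin_nonneg_of_nonneg_of_le_pi (by linarith) (by linarith)
    rw [ptCircleDist_eq s t hst h2, ptPF,
      Real.rpow_neg (by positivity), one_div]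
  rw [conv a c (by linarith) (by linarith), conv b d (by linarith) (by linarith),
    conv a d (by linarith) (by linarith), conv b c (by linarith) (by linarith)]
  have := ptKey α (c - b) (d - a) (c - a) (d - b) hα (by linarith) (by linarith)
    (by linarith) (by linarith) (by linarith) (by linarith) (by ring)
  linarith
end

section
/- Let 0 ≤ a < b < c < d < 2π and α > 0. Writing r(s,t) = 2 sin((t − s)/2) for the chord length between angles s < t with t − s < 2π, one has 1/r(a,c)^α + 1/r(b,d)^α < 1/r(a,d)^α + 1/r(b,c)^α. -/
open Real

private lemma chord_pos {x : ℝ} (hx : x ∈ Set.Ioo (0:ℝ) (2 * Real.pi)) :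
    0 < 2 * Real.sin (x / 2) := by
  have h1 : 0 < x / 2 := by linarith [hx.1]
  have h2 : x / 2 < Real.pi := by linarith [hx.2]
  have := Real.sin_pos_of_pos_of_lt_pi h1 h2
  linarith

private lemma chord_convex {α : ℝ} (hα : 0 < α) :
    StrictConvexOn ℝ (Set.Ioo (0:ℝ) (2 * Real.pi))
      (fun x => (2 * Real.sin (x / 2)) ^ (-α)) := by
  set S := Set.Ioo (0:ℝ) (2 * Real.pi)
  have hu : ∀ x : ℝ, HasDerivAt (fun y => 2 * Real.sin (y / 2)) (Real.cos (x / 2)) x := by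
    intro x
    have h := (((hasDerivAt_id x).div_const 2).sin).const_mul 2
    refine h.congr_deriv ?_
    simp only [id_eq]
    ring
  set f1 : ℝ → ℝ := fun x => Real.cos (x / 2) * -α * (2 * Real.sin (x / 2)) ^ (-α - 1) with hf1def
  have hf1 : ∀ x ∈ S, HasDerivAt (fun y => (2 * Real.sin (y / 2)) ^ (-α)) (f1 x) x := by
    intro x hx
    exact (hu x).rpow_const (Or.inl (ne_of_gt (chord_pos hx)))
  set f2 : ℝ → ℝ := fun x =>
    (α / 2) * Real.sin (x / 2) * (2 * Real.sin (x / 2)) ^ (-α - 1)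
      + α * (α + 1) * (Real.cos (x / 2) * Real.cos (x / 2)) * (2 * Real.sin (x / 2)) ^ (-α - 2)
    with hf2def
  have hf2 : ∀ x ∈ S, HasDerivAt f1 (f2 x) x := by
    intro x hx
    have hA : HasDerivAt (fun y => Real.cos (y / 2) * -α)
        (-Real.sin (x / 2) * (1 / 2) * -α) x := by
      have := ((((hasDerivAt_id x).div_const 2)).cos).mul_const (-α)
      exact this
    have hB : HasDerivAt (fun y => (2 * Real.sin (y / 2)) ^ (-α - 1))
        (Real.cos (x / 2) * (-α - 1) * (2 * Real.sin (x / 2)) ^ (-α - 1 - 1)) x :=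
      (hu x).rpow_const (Or.inl (ne_of_gt (chord_pos hx)))
    have h := hA.mul hB
    have he : (-α - 1 - 1 : ℝ) = -α - 2 := by ring
    rw [he] at h
    refine h.congr_deriv ?_
    simp only [hf2def]
    ring
  have hcont : ContinuousOn (fun x => (2 * Real.sin (x / 2)) ^ (-α)) S := by
    apply ContinuousOn.rpow_const
    · exact (continuous_const.mul (Real.continuous_sin.comp (continuous_id.div_const 2))).continuousOn
    · intro x hx
      exact Or.inl (ne_of_gt (chord_pos hx))
  apply strictConvexOn_of_deriv2_pos (convex_Ioo _ _) hcont
  intro x hx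
  rw [interior_Ioo] at hx
  have hd2 : deriv^[2] (fun x => (2 * Real.sin (x / 2)) ^ (-α)) x = f2 x := by
    have hEq : Set.EqOn (deriv (fun x => (2 * Real.sin (x / 2)) ^ (-α))) f1 S := by
      intro y hy
      exact (hf1 y hy).deriv
    have : deriv (deriv (fun x => (2 * Real.sin (x / 2)) ^ (-α))) x = deriv f1 x := by
      apply Filter.EventuallyEq.deriv_eq
      exact Filter.eventuallyEq_of_mem (isOpen_Ioo.mem_nhds hx) hEq
    simp only [Function.iterate_succ, Function.iterate_zero, Function.comp_apply, id]
    rw [this, (hf2 x hx).deriv]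
  rw [hd2]
  have hsin : 0 < Real.sin (x / 2) := by
    have := chord_pos hx; linarith
  have hpos := chord_pos hx
  have hr1 : 0 < (2 * Real.sin (x / 2)) ^ (-α - 1) := Real.rpow_pos_of_pos hpos _
  have hr2 : 0 < (2 * Real.sin (x / 2)) ^ (-α - 2) := Real.rpow_pos_of_pos hpos _
  have t1 : 0 < (α / 2) * Real.sin (x / 2) * (2 * Real.sin (x / 2)) ^ (-α - 1) :=
    mul_pos (mul_pos (by linarith) hsin) hr1
  have t2 : 0 ≤ α * (α + 1) * (Real.cos (x / 2) * Real.cos (x / 2))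
      * (2 * Real.sin (x / 2)) ^ (-α - 2) :=
    mul_nonneg (mul_nonneg (by nlinarith) (mul_self_nonneg _)) hr2.le
  simp only [hf2def]
  linarith

theorem ptolemy_type_angles (a b c d α : ℝ) (ha : 0 ≤ a) (hab : a < b) (hbc : b < c)
    (hcd : c < d) (hd : d < 2 * Real.pi) (hα : 0 < α) :
    1 / (2 * Real.sin ((c - a) / 2)) ^ α + 1 / (2 * Real.sin ((d - b) / 2)) ^ α <
      1 / (2 * Real.sin ((d - a) / 2)) ^ α + 1 / (2 * Real.sin ((c - b) / 2)) ^ α := by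
  have key := chord_convex hα
  set f : ℝ → ℝ := fun x => (2 * Real.sin (x / 2)) ^ (-α) with hf
  have hu : c - b ∈ Set.Ioo (0:ℝ) (2 * Real.pi) := ⟨by linarith, by linarith⟩
  have hv : d - a ∈ Set.Ioo (0:ℝ) (2 * Real.pi) := ⟨by linarith, by linarith⟩
  have hx : c - a ∈ Set.Ioo (0:ℝ) (2 * Real.pi) := ⟨by linarith, by linarith⟩
  have hy : d - b ∈ Set.Ioo (0:ℝ) (2 * Real.pi) := ⟨by linarith, by linarith⟩
  have hne : (c - b : ℝ) ≠ d - a := by intro h; nlinarith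
  have hden : (0:ℝ) < (d - c) + (b - a) := by linarith
  set t : ℝ := (d - c) / ((d - c) + (b - a)) with hts'
  set s : ℝ := (b - a) / ((d - c) + (b - a)) with hss'
  have ht : 0 < t := div_pos (by linarith) hden
  have hs : 0 < s := div_pos (by linarith) hden
  have hts : t + s = 1 := by
    rw [hts', hss', ← add_div, div_self hden.ne']
  have e1 : t • (c - b) + s • (d - a) = c - a := by
    simp only [smul_eq_mul, hts', hss']
    field_simp
    ring
  have e2 : s • (c - b) + t • (d - a) = d - b := by
    simp only [smul_eq_mul, hts', hss']
    field_simp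
    ring
  have h1 := key.2 hu hv hne ht hs hts
  have h2 := key.2 hu hv hne hs ht (by linarith)
  rw [e1] at h1
  rw [e2] at h2
  simp only [smul_eq_mul] at h1 h2
  have hsum : f (c - a) + f (d - b) < f (c - b) + f (d - a) := by
    have : t * f (c - b) + s * f (d - a) + (s * f (c - b) + t * f (d - a))
        = f (c - b) + f (d - a) := by
      linear_combination (f (c - b) + f (d - a)) * hts
    linarith
  have hconv : ∀ x ∈ Set.Ioo (0:ℝ) (2 * Real.pi),
      f x = 1 / (2 * Real.sin (x / 2)) ^ α := by
    intro x hx'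
    simp only [hf]
    rw [Real.rpow_neg (le_of_lt (chord_pos hx')), one_div]
  rw [hconv _ hx, hconv _ hy, hconv _ hu, hconv _ hv] at hsum
  linarith
end
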